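/- Let B be any nondegenerate symmetric ℝ/ℤ-valued pairing on the group A = (ℤ/2) × (ℤ/2), and let Q : A → ℝ/ℤ be a quadratic refinement of B with Q(0) = 0. Then the Gauss sum G(Q) is nonzero and the Arf invariant of Q lies in {0, 1/4, 1/2, 3/4} ⊂ ℝ/ℤ. (This is the corollary constraining the anomaly of the self-dual field on the manifold X₁₁, whose twisted cohomology H⁶(X₁₁;L) has torsion subgroup ℤ/2 ⊕ ℤ/2.) -/

import Mathlib

open scoped BigOperators

/-- The representative in `[0,1)` of an element of `ℝ/ℤ`. -/
noncomputable def rep (x : AddCircle (1 : ℝ)) : ℝ :=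
  (AddCircle.equivIco (1 : ℝ) 0 x).1

/-- The Gauss sum `G(Q) = Σ_{a ∈ A} exp(2πi·Q̃(a))` of an `ℝ/ℤ`-valued function `Q`
on a finite type, where `Q̃(a) ∈ [0,1)` is the representative of `Q(a)`. -/
noncomputable def gaussSumQ {A : Type*} [Fintype A] (Q : A → AddCircle (1 : ℝ)) : ℂ :=
  ∑ a, Complex.exp (2 * (Real.pi : ℂ) * Complex.I * (rep (Q a) : ℂ))

/-- The Arf invariant `(1/2π)·arg G(Q) ∈ ℝ/ℤ` of `Q` (meaningful when `G(Q) ≠ 0`). -/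
noncomputable def arf {A : Type*} [Fintype A] (Q : A → AddCircle (1 : ℝ)) :
    AddCircle (1 : ℝ) :=
  ((Complex.arg (gaussSumQ Q) / (2 * Real.pi) : ℝ) : AddCircle (1 : ℝ))

/- ### Auxiliary lemmas -/

lemma coe_rep (x : AddCircle (1 : ℝ)) : ((rep x : ℝ) : AddCircle (1 : ℝ)) = x :=
  (AddCircle.equivIco (1:ℝ) 0).symm_apply_apply x

lemma rep_mem (x : AddCircle (1 : ℝ)) : rep x ∈ Set.Ico (0:ℝ) 1 := by
  have := (AddCircle.equivIco (1:ℝ) 0 x).2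
  simpa [rep] using this

lemma rep_coe {c : ℝ} (h0 : 0 ≤ c) (h1 : c < 1) : rep ((c : ℝ) : AddCircle (1:ℝ)) = c := by
  unfold rep
  rw [AddCircle.coe_equivIco_mk_apply]
  simp [Int.fract_eq_self.mpr ⟨h0, h1⟩]

lemma coe_eq_key {x y : ℝ}
    (h : x - y = -3 ∨ x - y = -2 ∨ x - y = -1 ∨ x - y = 0 ∨ x - y = 1 ∨ x - y = 2 ∨ x - y = 3) :
    ((x : ℝ) : AddCircle (1:ℝ)) = (y : ℝ) := by
  have : ((x - y : ℝ) : AddCircle (1:ℝ)) = 0 := by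
    rw [AddCircle.coe_eq_zero_iff]
    rcases h with h|h|h|h|h|h|h
    exacts [⟨-3, by rw [h]; norm_num⟩, ⟨-2, by rw [h]; norm_num⟩, ⟨-1, by rw [h]; norm_num⟩,
      ⟨0, by rw [h]; norm_num⟩, ⟨1, by rw [h]; norm_num⟩, ⟨2, by rw [h]; norm_num⟩,
      ⟨3, by rw [h]; norm_num⟩]
  rw [AddCircle.coe_sub] at this
  exact sub_eq_zero.mp this

lemma torsion4 (x : AddCircle (1 : ℝ)) (h : x + x + x + x = 0) :
    rep x = 0 ∨ rep x = 1/4 ∨ rep x = 1/2 ∨ rep x = 3/4 := by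
  obtain ⟨h0, h1⟩ := rep_mem x
  have hc : ((rep x + rep x + rep x + rep x : ℝ) : AddCircle (1:ℝ)) = 0 := by
    rw [AddCircle.coe_add, AddCircle.coe_add, AddCircle.coe_add, coe_rep, h]
  rw [AddCircle.coe_eq_zero_iff] at hc
  obtain ⟨n, hn⟩ := hc
  simp only [zsmul_eq_mul, mul_one] at hn
  have hn0 : 0 ≤ n := by
    have : (0:ℝ) ≤ n := by rw [hn]; linarith
    exact_mod_cast this
  have hn4 : n < 4 := by
    have : (n:ℝ) < 4 := by rw [hn]; linarith
    exact_mod_cast this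
  interval_cases n
  · left; push_cast at hn; linarith
  · right; left; push_cast at hn; linarith
  · right; right; left; push_cast at hn; linarith
  · right; right; right; push_cast at hn; linarith

noncomputable def E (c : ℝ) : ℂ := Complex.exp (2 * (Real.pi : ℂ) * Complex.I * (c : ℂ))

lemma E_def (c : ℝ) : Complex.exp (2 * (Real.pi : ℂ) * Complex.I * (c : ℂ)) = E c := rfl

lemma E0 : E 0 = 1 := by simp [E]

lemma Ehalf : E (1/2) = -1 := by
  have : (2 * (Real.pi:ℂ) * Complex.I * ((1/2 : ℝ):ℂ)) = Real.pi * Complex.I := by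
    push_cast; ring
  rw [E, this, Complex.exp_pi_mul_I]

lemma Equarter : E (1/4) = Complex.I := by
  have : (2 * (Real.pi:ℂ) * Complex.I * ((1/4 : ℝ):ℂ)) = (Real.pi/2) * Complex.I := by
    push_cast; ring
  rw [E, this]
  simpa using Complex.exp_mul_I (Real.pi/2)

lemma E3q : E (3/4) = -Complex.I := by
  have : E (3/4) = E (1/2) * E (1/4) := by
    rw [E, E, E, ← Complex.exp_add]; push_cast; ring_nf
  rw [this, Ehalf, Equarter]; ring

lemma conclude {Q : ZMod 2 × ZMod 2 → AddCircle (1:ℝ)}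
    (h : gaussSumQ Q = 2 ∨ gaussSumQ Q = 2*Complex.I ∨ gaussSumQ Q = -2 ∨
      gaussSumQ Q = -(2*Complex.I)) :
    gaussSumQ Q ≠ 0 ∧
      arf Q ∈ ({((0 : ℝ) : AddCircle (1 : ℝ)), ((1/4 : ℝ) : AddCircle (1 : ℝ)),
        ((1/2 : ℝ) : AddCircle (1 : ℝ)), ((3/4 : ℝ) : AddCircle (1 : ℝ))} :
          Set (AddCircle (1 : ℝ))) := by
  have hpi := Real.pi_ne_zero
  have hI : Complex.I ≠ 0 := Complex.I_ne_zero
  rcases h with h|h|h|h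
  · refine ⟨by rw [h]; norm_num, ?_⟩
    have harg : Complex.arg (gaussSumQ Q) = 0 := by
      rw [h, show (2:ℂ) = ((2:ℝ):ℂ) by norm_num]
      exact Complex.arg_ofReal_of_nonneg (by norm_num)
    unfold arf
    rw [harg]
    exact Set.mem_insert_iff.mpr (Or.inl (congrArg _ (by norm_num)))
  · refine ⟨by rw [h]; simp [Complex.ext_iff], ?_⟩
    have harg : Complex.arg (gaussSumQ Q) = Real.pi / 2 := by
      rw [h, show (2:ℂ)*Complex.I = ((2:ℝ):ℂ) * Complex.I by norm_num,
        Complex.arg_real_mul _ (by norm_num), Complex.arg_I]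
    unfold arf
    rw [harg]
    refine Set.mem_insert_iff.mpr (Or.inr (Set.mem_insert_iff.mpr (Or.inl
      (congrArg _ ?_))))
    field_simp
    ring
  · refine ⟨by rw [h]; norm_num, ?_⟩
    have harg : Complex.arg (gaussSumQ Q) = Real.pi := by
      rw [h, show (-2:ℂ) = ((2:ℝ):ℂ) * (-1) by norm_num,
        Complex.arg_real_mul _ (by norm_num), Complex.arg_neg_one]
    unfold arf
    rw [harg]
    refine Set.mem_insert_iff.mpr (Or.inr (Set.mem_insert_iff.mpr (Or.inr
      (Set.mem_insert_iff.mpr (Or.inl (congrArg _ ?_))))))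
    field_simp
  · refine ⟨by rw [h]; simp [Complex.ext_iff], ?_⟩
    have harg : Complex.arg (gaussSumQ Q) = -(Real.pi / 2) := by
      rw [h, show -((2:ℂ)*Complex.I) = ((2:ℝ):ℂ) * (-Complex.I) by push_cast; ring,
        Complex.arg_real_mul _ (by norm_num), Complex.arg_neg_I]
    unfold arf
    rw [harg]
    refine Set.mem_insert_iff.mpr (Or.inr (Set.mem_insert_iff.mpr (Or.inr
      (Set.mem_insert_iff.mpr (Or.inr (Set.mem_singleton_iff.mpr ?_))))))
    have h1 : (-(Real.pi / 2) / (2*Real.pi) : ℝ) = -(1/4) := by field_simp; ring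
    rw [h1]
    exact coe_eq_key (by norm_num)

lemma computeG (Q : ZMod 2 × ZMod 2 → AddCircle (1:ℝ))
    (hQ0 : Q 0 = 0) :
    gaussSumQ Q = 1 + E (rep (Q (1,0))) + E (rep (Q (0,1))) + E (rep (Q (1,1))) := by
  have hrep0 : rep (Q 0) = 0 := by
    rw [hQ0, show (0 : AddCircle (1:ℝ)) = ((0:ℝ) : AddCircle (1:ℝ)) by norm_cast]
    exact rep_coe le_rfl one_pos
  unfold gaussSumQ
  rw [Fintype.sum_prod_type]
  show ∑ i : Fin 2, ∑ j : Fin 2, _ = _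
  rw [Fin.sum_univ_two, Fin.sum_univ_two, Fin.sum_univ_two]
  show Complex.exp (2 * (Real.pi : ℂ) * Complex.I * (rep (Q (0,0)) : ℂ)) +
      Complex.exp (2 * (Real.pi : ℂ) * Complex.I * (rep (Q (0,1)) : ℂ)) +
      (Complex.exp (2 * (Real.pi : ℂ) * Complex.I * (rep (Q (1,0)) : ℂ)) +
      Complex.exp (2 * (Real.pi : ℂ) * Complex.I * (rep (Q (1,1)) : ℂ))) = _
  rw [E_def, E_def, E_def, E_def, show ((0,0) : ZMod 2 × ZMod 2) = 0 from rfl, hrep0, E0]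
  ring
set_option maxHeartbeats 4000000 in
theorem arf_multiple_of_quarter_X11 :
    ∀ B : ZMod 2 × ZMod 2 → ZMod 2 × ZMod 2 → AddCircle (1 : ℝ),
      (∀ a b c, B (a + b) c = B a c + B b c) →
      (∀ a b c, B a (b + c) = B a b + B a c) →
      (∀ a b, B a b = B b a) →
      Function.Injective B →
      ∀ Q : ZMod 2 × ZMod 2 → AddCircle (1 : ℝ),
        (∀ v w, Q (v + w) - Q v - Q w + Q 0 = B v w) →
        Q 0 = 0 →
        gaussSumQ Q ≠ 0 ∧
        arf Q ∈ ({((0 : ℝ) : AddCircle (1 : ℝ)), ((1/4 : ℝ) : AddCircle (1 : ℝ)),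
          ((1/2 : ℝ) : AddCircle (1 : ℝ)), ((3/4 : ℝ) : AddCircle (1 : ℝ))} :
            Set (AddCircle (1 : ℝ))) := by
  intro B hadd1 hadd2 hsym hinj Q href hQ0
  have hz : (1 : ZMod 2) + 1 = 0 := rfl
  have hvv : ∀ v : ZMod 2 × ZMod 2, v + v = 0 := by decide
  have hB0 : ∀ v, B v 0 = 0 := by
    intro v
    have h := hadd2 v 0 0
    rw [add_zero] at h
    exact left_eq_add.mp h
  have hB2 : ∀ v w, B v w + B v w = 0 := by
    intro v w
    rw [← hadd2 v w w, hvv, hB0]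
  have hB : ∀ u w, B u w = Q (u+w) - Q u - Q w := by
    intro u w
    rw [← href u w, hQ0]
    abel
  have h4 : ∀ v, Q v + Q v + Q v + Q v = 0 := by
    intro v
    have h' := hB2 v v
    rw [hB v v, hvv v, hQ0] at h'
    have h2 : Q v + Q v + Q v + Q v = -((0 - Q v - Q v) + (0 - Q v - Q v)) := by abel
    rw [h2, h', neg_zero]
  have hx1 : Q (1,0) = ((rep (Q (1,0)) : ℝ) : AddCircle (1:ℝ)) := (coe_rep _).symm
  have hx2 : Q (0,1) = ((rep (Q (0,1)) : ℝ) : AddCircle (1:ℝ)) := (coe_rep _).symm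
  have hx3 : Q (1,1) = ((rep (Q (1,1)) : ℝ) : AddCircle (1:ℝ)) := (coe_rep _).symm
  have hx0 : Q (0,0) = ((0 : ℝ) : AddCircle (1:ℝ)) := by
    rw [show ((0,0) : ZMod 2 × ZMod 2) = 0 from rfl, hQ0]; norm_cast
  have hk : ∃ n : ℤ, (n : ℝ) = (rep (Q (1,1)) - rep (Q (1,0)) - rep (Q (0,1))) +
      (rep (Q (1,1)) - rep (Q (1,0)) - rep (Q (0,1))) := by
    have e12 : B (1,0) (0,1) =
        (((rep (Q (1,1)) - rep (Q (1,0)) - rep (Q (0,1))) : ℝ) : AddCircle (1:ℝ)) := by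
      rw [hB, show ((1,0) : ZMod 2 × ZMod 2) + (0,1) = (1,1) from rfl,
        AddCircle.coe_sub, AddCircle.coe_sub, coe_rep, coe_rep, coe_rep]
    have h2 := hB2 (1,0) (0,1)
    rw [e12, ← AddCircle.coe_add, AddCircle.coe_eq_zero_iff] at h2
    obtain ⟨n, hn⟩ := h2
    refine ⟨n, ?_⟩
    have h := hn
    simp only [zsmul_eq_mul, mul_one] at h
    exact h
  have hG := computeG Q hQ0
  have ha1 := torsion4 _ (h4 (1,0))
  have ha2 := torsion4 _ (h4 (0,1))
  have ha3 := torsion4 _ (h4 (1,1))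
  rcases ha1 with ha1|ha1|ha1|ha1 <;> rcases ha2 with ha2|ha2|ha2|ha2 <;>
    rcases ha3 with ha3|ha3|ha3|ha3 <;>
  rw [ha1, ha2, ha3] at hG hk <;>
  first
  | (exfalso
     obtain ⟨n, hn⟩ := hk
     have hfr : Int.fract ((n:ℝ)) = 0 := Int.fract_intCast n
     rw [hn] at hfr
     norm_num [Int.fract] at hfr
     done)
  | (refine conclude ?_
     rw [hG]
     simp only [E0, Ehalf, Equarter, E3q]
     first
     | (left; ring1)
     | (right; left; ring1)
     | (right; right; left; ring1)
     | (right; right; right; ring1))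
  | (have hy1 := hx1.trans (congrArg (fun x : ℝ => (x : AddCircle (1:ℝ))) ha1)
     have hy2 := hx2.trans (congrArg (fun x : ℝ => (x : AddCircle (1:ℝ))) ha2)
     have hy3 := hx3.trans (congrArg (fun x : ℝ => (x : AddCircle (1:ℝ))) ha3)
     refine absurd (hinj (funext fun w => ?_))
       (show ¬((1,0) : ZMod 2 × ZMod 2) = (0,0) by decide)
     rcases (by decide :
         ∀ u : ZMod 2 × ZMod 2, u = (0,0) ∨ u = (1,0) ∨ u = (0,1) ∨ u = (1,1)) w
       with h|h|h|h <;> subst h <;>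
       (rw [hB, hB]
        simp only [Prod.mk_add_mk, add_zero, zero_add, hz, hx0, hy1, hy2, hy3]
        try rfl
        try (simp only [← AddCircle.coe_sub]
             apply coe_eq_key
             norm_num))
     done)
  | (have hy1 := hx1.trans (congrArg (fun x : ℝ => (x : AddCircle (1:ℝ))) ha1)
     have hy2 := hx2.trans (congrArg (fun x : ℝ => (x : AddCircle (1:ℝ))) ha2)
     have hy3 := hx3.trans (congrArg (fun x : ℝ => (x : AddCircle (1:ℝ))) ha3)
     refine absurd (hinj (funext fun w => ?_))
       (show ¬((0,1) : ZMod 2 × ZMod 2) = (0,0) by decide)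
     rcases (by decide :
         ∀ u : ZMod 2 × ZMod 2, u = (0,0) ∨ u = (1,0) ∨ u = (0,1) ∨ u = (1,1)) w
       with h|h|h|h <;> subst h <;>
       (rw [hB, hB]
        simp only [Prod.mk_add_mk, add_zero, zero_add, hz, hx0, hy1, hy2, hy3]
        try rfl
        try (simp only [← AddCircle.coe_sub]
             apply coe_eq_key
             norm_num))
     done)
  | (have hy1 := hx1.trans (congrArg (fun x : ℝ => (x : AddCircle (1:ℝ))) ha1)
     have hy2 := hx2.trans (congrArg (fun x : ℝ => (x : AddCircle (1:ℝ))) ha2)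
     have hy3 := hx3.trans (congrArg (fun x : ℝ => (x : AddCircle (1:ℝ))) ha3)
     refine absurd (hinj (funext fun w => ?_))
       (show ¬((1,0) : ZMod 2 × ZMod 2) = (0,1) by decide)
     rcases (by decide :
         ∀ u : ZMod 2 × ZMod 2, u = (0,0) ∨ u = (1,0) ∨ u = (0,1) ∨ u = (1,1)) w
       with h|h|h|h <;> subst h <;>
       (rw [hB, hB]
        simp only [Prod.mk_add_mk, add_zero, zero_add, hz, hx0, hy1, hy2, hy3]
        try rfl
        try (simp only [← AddCircle.coe_sub]
             apply coe_eq_key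
             norm_num))
     done)
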